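/- With S as in situation (6), for any face τ: S + ℤ(A∩τ) = [S_c + ℤ(A∩τ)] \ ⋃_{τ_i ⊇ τ} (b_i + ℤ(A∩τ_i)). -/
import Mathlib


open Function

/-- Lattice `ℤ^d`. -/
abbrev Zd (d : ℕ) := Fin d → ℤ

noncomputable section

namespace SaitoTakahashi

variable {d : ℕ}

/-- The affine semigroup `ℕA` generated by the finite set `A ⊆ ℤ^d`. -/
def NA (A : Finset (Zd d)) : AddSubmonoid (Zd d) := AddSubmonoid.closure (A : Set (Zd d))

/-- The group `ℤA` generated by `A`. -/
def ZA (A : Finset (Zd d)) : AddSubgroup (Zd d) := AddSubgroup.closure (A : Set (Zd d))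

/-- Realification of a lattice point. -/
def toR (a : Zd d) : Fin d → ℝ := fun i => (a i : ℝ)

/-- The real cone `ℝ≥0 A`. -/
def coneOf (A : Finset (Zd d)) : Set (Fin d → ℝ) :=
  { x | ∃ c : Zd d → ℝ, (∀ a, 0 ≤ c a) ∧ x = ∑ a ∈ A, c a • toR a }

/-- The cone `ℝ≥0 A` is strongly convex. -/
def StronglyConvex (A : Finset (Zd d)) : Prop :=
  ∀ x ∈ coneOf A, -x ∈ coneOf A → x = 0

/-- `B = A ∩ τ` for a face `τ` of the cone `ℝ≥0 A`, i.e. `B` is the subset of `A`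
cut out by an integral supporting functional which is nonnegative on `A`. -/
def IsFace (A B : Finset (Zd d)) : Prop :=
  ∃ G : Zd d →+ ℤ, B ⊆ A ∧ (∀ a ∈ A, 0 ≤ G a) ∧ ∀ a ∈ A, (G a = 0 ↔ a ∈ B)

/-- `F` is the primitive integral support function of a facet of `ℝ≥0 A`:
nonnegative on the cone, surjective onto `ℤ` (primitivity, using `ℤA = ℤ^d`),
and its zero set in the cone is a face of dimension `d - 1`. -/
def IsFacetFn (A : Finset (Zd d)) (F : Zd d →+ ℤ) : Prop :=
  (∀ a ∈ A, 0 ≤ F a) ∧ Surjective F ∧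
    Module.finrank ℝ ↥(Submodule.span ℝ (toR '' {a : Zd d | a ∈ A ∧ F a = 0})) = d - 1

/-- The set `A ∩ σ` for the facet with primitive integral support function `F`. -/
def facetSet (A : Finset (Zd d)) (F : Zd d →+ ℤ) : Finset (Zd d) :=
  A.filter fun a => F a = 0

/-- `S` is an `ℕA`-set: `S + ℕA ⊆ S`. -/
def IsNASet (A : Finset (Zd d)) (S : Set (Zd d)) : Prop :=
  ∀ s ∈ S, ∀ a ∈ NA A, s + a ∈ S

/-- `S` is a finitely generated `ℕA`-set. -/
def IsFGNASet (A : Finset (Zd d)) (S : Set (Zd d)) : Prop :=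
  IsNASet A S ∧ ∃ G : Finset (Zd d), S = { x | ∃ g ∈ G, ∃ a ∈ NA A, x = g + a }

/-- `S` is scored: `S = ⋂_{σ facet} { a ∈ ℤ^d : F_σ(a) ∈ F_σ(S) }`. -/
def IsScored (A : Finset (Zd d)) (S : Set (Zd d)) : Prop :=
  S = { x : Zd d | ∀ F : Zd d →+ ℤ, IsFacetFn A F → F x ∈ F '' S }

/-- `S + ℤ(A ∩ τ)` where `B = A ∩ τ`. -/
def plusZ (S : Set (Zd d)) (B : Finset (Zd d)) : Set (Zd d) :=
  { x | ∃ s ∈ S, ∃ z ∈ AddSubgroup.closure (B : Set (Zd d)), x = s + z }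

/-- The coset `b + ℤ(A ∩ τ)` where `B = A ∩ τ`. -/
def coset (b : Zd d) (B : Finset (Zd d)) : Set (Zd d) :=
  { x | x - b ∈ AddSubgroup.closure (B : Set (Zd d)) }

/-- The standard-expression setting of the paper:
`S = S_c \ ⋃ᵢ (bᵢ + ℤ(A∩τᵢ))`, where `S_c` is a finitely generated scored
`ℕA`-set (the scored closure of `S`), `bᵢ ∈ S_c`, the `τᵢ` are faces of `ℝ≥0 A`
(encoded by `Bf i = A ∩ τᵢ`), and `F_σ(S) = F_σ(S_c)` for every facet `σ`. -/
structure Setting (A : Finset (Zd d)) (Sc S : Set (Zd d)) {m : ℕ}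
    (b : Fin m → Zd d) (Bf : Fin m → Finset (Zd d)) : Prop where
  latt : ZA A = ⊤
  convex : StronglyConvex A
  fg : IsFGNASet A Sc
  scored : IsScored A Sc
  bIn : ∀ i, b i ∈ Sc
  face : ∀ i, IsFace A (Bf i)
  expr : S = Sc \ ⋃ i, coset (b i) (Bf i)
  sameF : ∀ F : Zd d →+ ℤ, IsFacetFn A F → F '' S = F '' Sc

/-- The expression `S = S_c \ ⋃ᵢ (bᵢ + ℤ(A∩τᵢ))` is irredundant. -/
def Irredundant (Sc S : Set (Zd d)) {m : ℕ}
    (b : Fin m → Zd d) (Bf : Fin m → Finset (Zd d)) : Prop :=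
  ∀ i, Sc \ ⋃ j, ⋃ (_ : j ≠ i), coset (b j) (Bf j) ≠ S

section Kside

variable (K : Type) [Field K]

/-- A lattice point as a point of `K^d`. -/
def toK (a : Zd d) : Fin d → K := fun i => (a i : K)

/-- The vanishing ideal `𝕀(V) ⊆ K[s₁,…,s_d]` of a subset `V ⊆ K^d`. -/
def vIdeal (V : Set (Fin d → K)) : Ideal (MvPolynomial (Fin d) K) :=
  ⨅ v ∈ V, RingHom.ker (MvPolynomial.eval v)

/-- `Ω_{S,S'}(a) = S \ (−a + S')`. -/
def Omega (S S' : Set (Zd d)) (a : Zd d) : Set (Zd d) := S \ { x | a + x ∈ S' }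

/-- The `K`-algebra map `f(s) ↦ f(s − c)`. -/
def shiftHom (c : Fin d → K) : MvPolynomial (Fin d) K →+* MvPolynomial (Fin d) K :=
  MvPolynomial.eval₂Hom MvPolynomial.C (fun i => MvPolynomial.X i - MvPolynomial.C (c i))

/-- The translate `I + c = { f(s − c) : f ∈ I }` of an ideal of `K[s]`. -/
def shiftIdeal (I : Ideal (MvPolynomial (Fin d) K)) (c : Fin d → K) :
    Ideal (MvPolynomial (Fin d) K) :=
  I.map (shiftHom K c)

/-- The `K`-span `Kτ` of a face, where `B = A ∩ τ`. -/
def spanK (B : Finset (Zd d)) : Submodule K (Fin d → K) :=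
  Submodule.span K (toK K '' (B : Set (Zd d)))

/-- `lam` is (a representative of) an element of `E(S)_τ(α)`:
`lam ∈ Kτ` and `α − lam ∈ S + ℤ(A∩τ)`, where `B = A ∩ τ`. -/
def memE (S : Set (Zd d)) (B : Finset (Zd d)) (α lam : Fin d → K) : Prop :=
  lam ∈ spanK K B ∧
    ∃ s ∈ S, ∃ z ∈ AddSubgroup.closure (B : Set (Zd d)), α - lam = toK K s + toK K z

/-- The `K`-linear extension of an integral linear form `F` to `K^d`. -/
def FK (F : Zd d →+ ℤ) (v : Fin d → K) : K :=
  ∑ i, ((F (Pi.single i 1) : ℤ) : K) * v i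

/-- The affine translate `α + Kτ ⊆ K^d`, where `B = A ∩ τ`. -/
def aff (α : Fin d → K) (B : Finset (Zd d)) : Set (Fin d → K) :=
  { x | ∃ lam ∈ spanK K B, x = α + lam }

end Kside

end SaitoTakahashi

namespace SaitoTakahashi

/-- Lemma 4.9. For any face `τ`:
`S + ℤ(A∩τ) = [S_c + ℤ(A∩τ)] \ ⋃_{τᵢ ⊇ τ} (bᵢ + ℤ(A∩τᵢ))`. -/
theorem plusZ_standard_expression {d m : ℕ}
    (A : Finset (Zd d)) (Sc S : Set (Zd d))
    (b : Fin m → Zd d) (Bf : Fin m → Finset (Zd d))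
    (hset : Setting A Sc S b Bf) (hirr : Irredundant Sc S b Bf)
    (Bτ : Finset (Zd d)) (hτ : IsFace A Bτ) :
    plusZ S Bτ = plusZ Sc Bτ \ ⋃ i, ⋃ (_ : Bτ ⊆ Bf i), coset (b i) (Bf i) := by
  obtain ⟨Gτ, hBτA, _, _⟩ := hτ
  choose G hGsub hGnn hGzero using hset.face
  -- closure monotonicity helper
  have hmono : ∀ i, Bτ ⊆ Bf i →
      AddSubgroup.closure (Bτ : Set (Zd d)) ≤ AddSubgroup.closure ((Bf i : Finset (Zd d)) : Set (Zd d)) := by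
    intro i hi
    exact AddSubgroup.closure_mono (by exact_mod_cast hi)
  -- G i vanishes on ℤ(Bf i)
  have hker : ∀ i, ∀ y ∈ AddSubgroup.closure ((Bf i : Finset (Zd d)) : Set (Zd d)), G i y = 0 := by
    intro i y hy
    have : AddSubgroup.closure ((Bf i : Finset (Zd d)) : Set (Zd d)) ≤ (G i).ker := by
      apply AddSubgroup.closure_le _ |>.mpr
      intro a ha
      have ha' : a ∈ Bf i := by exact_mod_cast ha
      exact (hGzero i a (hGsub i ha')).mpr ha'
    exact this hy
  ext x
  constructor
  · -- easy inclusion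
    rintro ⟨s, hs, z, hz, rfl⟩
    have hsS := hs
    rw [hset.expr] at hsS
    refine ⟨⟨s, hsS.1, z, hz, rfl⟩, ?_⟩
    intro hmem
    simp only [Set.mem_iUnion] at hmem
    obtain ⟨i, hsub, hx⟩ := hmem
    apply hsS.2
    refine Set.mem_iUnion.mpr ⟨i, ?_⟩
    have hz' : z ∈ AddSubgroup.closure ((Bf i : Finset (Zd d)) : Set (Zd d)) := hmono i hsub hz
    have : s - b i = (s + z - b i) - z := by ring
    show s - b i ∈ AddSubgroup.closure ((Bf i : Finset (Zd d)) : Set (Zd d))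
    rw [this]
    exact AddSubgroup.sub_mem _ hx hz'
  · rintro ⟨⟨s, hs, z, hz, rfl⟩, hnot⟩
    simp only [Set.mem_iUnion, not_exists] at hnot
    -- the element t = ∑ a ∈ Bτ, a
    set t : Zd d := ∑ a ∈ Bτ, a with ht
    have htNA : t ∈ NA A := by
      apply AddSubmonoid.sum_mem
      intro a ha
      exact AddSubmonoid.subset_closure (by exact_mod_cast hBτA ha)
    have htZ : t ∈ AddSubgroup.closure (Bτ : Set (Zd d)) := by
      apply AddSubgroup.sum_mem
      intro a ha
      exact AddSubgroup.subset_closure (by exact_mod_cast ha)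
    -- positivity of G i t for bad i
    have htpos : ∀ i, ¬ Bτ ⊆ Bf i → 1 ≤ G i t := by
      intro i hi
      obtain ⟨a₀, ha₀, ha₀'⟩ := Finset.not_subset.mp hi
      have hpos : 0 < G i t := by
        rw [ht, map_sum]
        apply Finset.sum_pos'
        · intro a ha; exact hGnn i a (hBτA ha)
        · refine ⟨a₀, ha₀, ?_⟩
          have h0 := hGnn i a₀ (hBτA ha₀)
          have hne : G i a₀ ≠ 0 := fun h => ha₀' ((hGzero i a₀ (hBτA ha₀)).mp h)
          omega
      omega
    -- choose n large
    set n : ℕ := 1 + Finset.univ.sup (fun i : Fin m => (G i (b i) - G i s).toNat) with hn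
    have hnbig : ∀ i, ¬ Bτ ⊆ Bf i → G i (b i) < G i (s + n • t) := by
      intro i hi
      have h1 : (G i (b i) - G i s).toNat ≤ Finset.univ.sup
          (fun i : Fin m => (G i (b i) - G i s).toNat) :=
        Finset.le_sup (f := fun i : Fin m => (G i (b i) - G i s).toNat) (Finset.mem_univ i)
      have h2 : G i (b i) - G i s < (n : ℤ) := by
        have := Int.self_le_toNat (G i (b i) - G i s)
        omega
      have h3 : (n : ℤ) ≤ (n : ℤ) * G i t := by
        have := htpos i hi
        nlinarith
      have h4 : G i (s + n • t) = G i s + (n : ℤ) * G i t := by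
        rw [map_add, map_nsmul, nsmul_eq_mul]
      omega
    -- s' = s + n • t belongs to S
    have hnt_NA : (n • t : Zd d) ∈ NA A := AddSubmonoid.nsmul_mem _ htNA n
    have hnt_Z : (n • t : Zd d) ∈ AddSubgroup.closure (Bτ : Set (Zd d)) :=
      AddSubgroup.nsmul_mem _ htZ n
    have hs'Sc : s + n • t ∈ Sc := hset.fg.1 s hs _ hnt_NA
    have hs'S : s + n • t ∈ S := by
      rw [hset.expr]
      refine ⟨hs'Sc, ?_⟩
      intro hmem
      obtain ⟨i, hx⟩ := Set.mem_iUnion.mp hmem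
      have hx' : (s + n • t) - b i ∈ AddSubgroup.closure ((Bf i : Finset (Zd d)) : Set (Zd d)) := hx
      by_cases hsub : Bτ ⊆ Bf i
      · apply hnot i hsub
        have hz' := hmono i hsub hz
        have hnt' := hmono i hsub hnt_Z
        have : (s + z) - b i = ((s + n • t) - b i) - n • t + z := by ring
        show (s + z) - b i ∈ AddSubgroup.closure ((Bf i : Finset (Zd d)) : Set (Zd d))
        rw [this]
        exact AddSubgroup.add_mem _ (AddSubgroup.sub_mem _ hx' hnt') hz'
      · have := hker i _ hx'
        have hGb : G i ((s + n • t) - b i) = G i (s + n • t) - G i (b i) := by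
          rw [map_sub]
        have := hnbig i hsub
        omega
    refine ⟨s + n • t, hs'S, z - n • t, AddSubgroup.sub_mem _ hz hnt_Z, by ring⟩

end SaitoTakahashi
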